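/- arXiv:1212.6117 — 6 statements merged into one kernel-verified Lean document; each statement's English description precedes it below -/
import Mathlib

section
/- Let G be a group and φ: G → ℝ a quasimorphism that is conjugation-invariant (φ(xyx⁻¹) = φ(y)) and antisymmetric (φ(x⁻¹) = −φ(x)). Then for all a, b ∈ G and all k ≥ 1, |φ((ab)^{3^k}) − φ((a³b³)^{3^{k−1}})| ≤ 2·D(φ)·3^{k−1}. -/
theorem qm_power3_estimate {G : Type*} [Group G] (φ : G → ℝ) (D : ℝ) (hD : 0 ≤ D)
    (hq : ∀ x y : G, |φ (x * y) - φ x - φ y| ≤ D)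
    (hconj : ∀ x y : G, φ (x * y * x⁻¹) = φ y)
    (hanti : ∀ x : G, φ x⁻¹ = -φ x)
    (a b : G) (k : ℕ) (hk : 1 ≤ k) :
    |φ ((a * b) ^ 3 ^ k) - φ ((a ^ 3 * b ^ 3) ^ 3 ^ (k - 1))| ≤ 2 * D * 3 ^ (k - 1) := by
  obtain ⟨m, rfl⟩ : ∃ m, k = m + 1 := ⟨k - 1, (Nat.succ_pred_eq_of_pos hk).symm⟩
  simp only [Nat.add_sub_cancel]
  -- quasimorphisms are bounded on commutators
  have hcomm : ∀ u v : G, |φ (u * v * u⁻¹ * v⁻¹)| ≤ D := by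
    intro u v
    have h1 := hq (u * v) (u⁻¹ * v⁻¹)
    have h2 : φ (u⁻¹ * v⁻¹) = - φ (u * v) := by
      have e1 : u⁻¹ * v⁻¹ = (v * u)⁻¹ := by group
      rw [e1, hanti]
      have h3 := hconj v (u * v)
      have e2 : v * (u * v) * v⁻¹ = v * u := by group
      rw [e2] at h3
      rw [h3]
    have e : u * v * (u⁻¹ * v⁻¹) = u * v * u⁻¹ * v⁻¹ := by group
    rw [e, h2] at h1
    simpa using h1
  -- main induction: (a³b³)^(n+1) = P · (ab)^(3(n+1)) with |φ P| ≤ (2n+1)D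
  have key : ∀ n : ℕ, ∃ P : G,
      (a ^ 3 * b ^ 3) ^ (n + 1) = P * (a * b) ^ (3 * (n + 1)) ∧
      |φ P| ≤ (2 * (n : ℝ) + 1) * D := by
    intro n
    induction n with
    | zero =>
      refine ⟨(a^3*b*a⁻¹) * (a*b*a⁻¹*a⁻¹) * (a^3*b*a⁻¹)⁻¹ * (a*b*a⁻¹*a⁻¹)⁻¹,
        by simp only [pow_succ, pow_zero, one_mul]; group, ?_⟩
      have := hcomm (a^3*b*a⁻¹) (a*b*a⁻¹*a⁻¹)
      push_cast
      linarith
    | succ n ih =>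
      obtain ⟨P, hP, hPb⟩ := ih
      set z := (a * b) ^ (3 * (n + 1)) with hz
      set c := (a^3*b*a⁻¹) * (a*b*a⁻¹*a⁻¹) * (a^3*b*a⁻¹)⁻¹ * (a*b*a⁻¹*a⁻¹)⁻¹ with hc
      refine ⟨P * (z * c * z⁻¹), ?_, ?_⟩
      · have hb : a ^ 3 * b ^ 3 = c * (a * b) ^ 3 := by
          rw [hc]; simp only [pow_succ, pow_zero, one_mul]; group
        rw [pow_succ, hP, hb, show 3 * (n + 1 + 1) = 3 * (n + 1) + 3 from by ring,
          pow_add, ← hz]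
        group
      · have hcz : φ (z * c * z⁻¹) = φ c := hconj z c
        have hcb : |φ c| ≤ D := by rw [hc]; exact hcomm _ _
        have h := hq P (z * c * z⁻¹)
        rw [hcz] at h
        rw [abs_le] at h hcb hPb ⊢
        push_cast
        constructor <;> linarith
  -- conclude
  obtain ⟨n', hn'⟩ : ∃ n', 3 ^ m = n' + 1 :=
    ⟨3 ^ m - 1, (Nat.succ_pred_eq_of_pos (by positivity : (0:ℕ) < 3 ^ m)).symm⟩
  obtain ⟨P, hP, hPb⟩ := key n'
  have hexp : (a * b) ^ (3 * (n' + 1)) = (a * b) ^ (3 ^ (m + 1)) := by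
    congr 1
    rw [← hn', pow_succ]
    ring
  rw [hexp] at hP
  rw [hn', hP]
  have h := hq P ((a * b) ^ (3 ^ (m + 1)))
  have hcast : ((3 : ℝ) ^ m) = (n' : ℝ) + 1 := by
    have := congrArg (fun t : ℕ => (t : ℝ)) hn'
    push_cast at this
    exact this
  rw [abs_le] at h hPb ⊢
  rw [hcast]
  constructor <;> linarith
end

section
/- Let G be a group and φ: G → ℝ a quasimorphism that is conjugation-invariant (φ(xyx⁻¹) = φ(y)) and antisymmetric (φ(x⁻¹) = −φ(x)). Then for all a, b ∈ G and all n ≥ 1, |φ((ab)^{3ⁿ}) − φ(a^{3ⁿ} b^{3ⁿ})| ≤ D(φ)·(3ⁿ − 1). -/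
section Aux

variable {G : Type*} [Group G] (φ : G → ℝ) (D : ℝ)

lemma qm_cube_identity (U A B : G) :
    U ^ 3 * (B ^ 3)⁻¹ * (A ^ 3)⁻¹
      = (U * B⁻¹ * A⁻¹) * ((A * B) * (U * B⁻¹ * A⁻¹) * (A * B)⁻¹) *
        ((A * B) ^ 2 * (U * B⁻¹ * A⁻¹) * ((A * B) ^ 2)⁻¹) *
        ((A * B) ^ 3 * (B ^ 3)⁻¹ * (A ^ 3)⁻¹) := by
  simp only [pow_succ, pow_zero, one_mul, mul_inv_rev]
  group

/-- φ of a commutator (in the form g * (w * g⁻¹ * w⁻¹)) is bounded by D. -/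
lemma qm_comm_bound
    (hq : ∀ x y : G, |φ (x * y) - φ x - φ y| ≤ D)
    (hconj : ∀ x y : G, φ (x * y * x⁻¹) = φ y)
    (hanti : ∀ x : G, φ x⁻¹ = -φ x)
    (g w : G) : |φ (g * (w * g⁻¹ * w⁻¹))| ≤ D := by
  have h1 := hq g (w * g⁻¹ * w⁻¹)
  rw [hconj w g⁻¹, hanti g] at h1
  have e : φ (g * (w * g⁻¹ * w⁻¹)) - φ g - -φ g = φ (g * (w * g⁻¹ * w⁻¹)) := by ring
  rwa [e] at h1

/-- φ((xy)³ y⁻³ x⁻³) is bounded by D, since this element is conjugate to a commutator. -/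
lemma qm_c3_bound
    (hq : ∀ x y : G, |φ (x * y) - φ x - φ y| ≤ D)
    (hconj : ∀ x y : G, φ (x * y * x⁻¹) = φ y)
    (hanti : ∀ x : G, φ x⁻¹ = -φ x)
    (x y : G) : |φ ((x * y) ^ 3 * (y ^ 3)⁻¹ * (x ^ 3)⁻¹)| ≤ D := by
  have key : (x * y) ^ 3 * (y ^ 3)⁻¹ * (x ^ 3)⁻¹
      = (x * y * x * y) *
        ((x * y⁻¹) * ((y⁻¹ * x⁻¹ * x⁻¹) * (x * y⁻¹)⁻¹ * (y⁻¹ * x⁻¹ * x⁻¹)⁻¹)) *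
        (x * y * x * y)⁻¹ := by
    simp only [pow_succ, pow_zero, one_mul, mul_inv_rev]
    group
  rw [key, hconj]
  exact qm_comm_bound φ D hq hconj hanti _ _

/-- Main inductive bound on φ((ab)^{3ⁿ} b^{-3ⁿ} a^{-3ⁿ}). -/
lemma qm_cN_bound
    (hq : ∀ x y : G, |φ (x * y) - φ x - φ y| ≤ D)
    (hconj : ∀ x y : G, φ (x * y * x⁻¹) = φ y)
    (hanti : ∀ x : G, φ x⁻¹ = -φ x)
    (hD : 0 ≤ D) :
    ∀ n : ℕ, 1 ≤ n → ∀ a b : G,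
      |φ ((a * b) ^ 3 ^ n * (b ^ 3 ^ n)⁻¹ * (a ^ 3 ^ n)⁻¹)| ≤ D * ((3 : ℝ) ^ n - 2) := by
  intro n hn
  induction n, hn using Nat.le_induction with
  | base =>
    intro a b
    have h := qm_c3_bound φ D hq hconj hanti a b
    have e : D * ((3 : ℝ) ^ 1 - 2) = D := by ring
    rw [e]
    simpa using h
  | succ n hn ih =>
    intro a b
    have e1 : ∀ x : G, x ^ 3 ^ (n + 1) = (x ^ 3 ^ n) ^ 3 := by
      intro x; rw [pow_succ, pow_mul]
    rw [e1 (a * b), e1 a, e1 b,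
      qm_cube_identity ((a * b) ^ 3 ^ n) (a ^ 3 ^ n) (b ^ 3 ^ n)]
    set A : G := a ^ 3 ^ n
    set B : G := b ^ 3 ^ n
    set U : G := (a * b) ^ 3 ^ n
    set c : G := U * B⁻¹ * A⁻¹ with hc
    set v : G := A * B with hv
    set d : G := (A * B) ^ 3 * (B ^ 3)⁻¹ * (A ^ 3)⁻¹ with hd
    have h1 := hq (c * (v * c * v⁻¹) * (v ^ 2 * c * (v ^ 2)⁻¹)) d
    have h2 := hq (c * (v * c * v⁻¹)) (v ^ 2 * c * (v ^ 2)⁻¹)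
    have h3 := hq c (v * c * v⁻¹)
    have e2 : φ (v * c * v⁻¹) = φ c := hconj v c
    have e3 : φ (v ^ 2 * c * (v ^ 2)⁻¹) = φ c := hconj (v ^ 2) c
    rw [e2] at h3
    rw [e3] at h2
    have hdb : |φ d| ≤ D := qm_c3_bound φ D hq hconj hanti A B
    have hcb : |φ c| ≤ D * ((3 : ℝ) ^ n - 2) := ih a b
    have p1 := abs_le.mp h1
    have p2 := abs_le.mp h2
    have p3 := abs_le.mp h3
    have pd := abs_le.mp hdb
    have pc := abs_le.mp hcb
    rw [abs_le]
    have e4 : (3 : ℝ) ^ (n + 1) = 3 * (3 : ℝ) ^ n := by ring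
    rw [e4]
    constructor <;> nlinarith [p1.1, p1.2, p2.1, p2.2, p3.1, p3.2, pd.1, pd.2, pc.1, pc.2]

end Aux

theorem qm_power3_estimate_iterated {G : Type*} [Group G] (φ : G → ℝ) (D : ℝ) (hD : 0 ≤ D)
    (hq : ∀ x y : G, |φ (x * y) - φ x - φ y| ≤ D)
    (hconj : ∀ x y : G, φ (x * y * x⁻¹) = φ y)
    (hanti : ∀ x : G, φ x⁻¹ = -φ x)
    (a b : G) (n : ℕ) (hn : 1 ≤ n) :
    |φ ((a * b) ^ 3 ^ n) - φ (a ^ 3 ^ n * b ^ 3 ^ n)| ≤ D * (3 ^ n - 1) := by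
  have hc := qm_cN_bound φ D hq hconj hanti hD n hn a b
  have h1 := hq ((a * b) ^ 3 ^ n) ((b ^ 3 ^ n)⁻¹ * (a ^ 3 ^ n)⁻¹)
  have e1 : (b ^ 3 ^ n)⁻¹ * (a ^ 3 ^ n)⁻¹ = (a ^ 3 ^ n * b ^ 3 ^ n)⁻¹ := by group
  have e2 : (a * b) ^ 3 ^ n * ((b ^ 3 ^ n)⁻¹ * (a ^ 3 ^ n)⁻¹)
      = (a * b) ^ 3 ^ n * (b ^ 3 ^ n)⁻¹ * (a ^ 3 ^ n)⁻¹ := by group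
  rw [e2, e1, hanti] at h1
  have p1 := abs_le.mp h1
  have pc := abs_le.mp hc
  rw [abs_le]
  constructor <;> nlinarith [p1.1, p1.2, pc.1, pc.2]
end

section
/- Let r, m, j be positive integers with 2 ≤ r ≤ m and 1 ≤ j ≤ m−1. Then (1/(rm)) · Σ_{i=1}^{r−1} (rm − 2|mi − rj|) = (2/r)·{ (rj/m − ⌊rj/m⌋ − 1/2)² + r²·j·(m−j)/m² − 1/4 }. -/
open Finset

lemma sum_Ioc_id_real (a b : ℕ) (h : a ≤ b) :
    (∑ i ∈ Finset.Ioc a b, (i : ℝ)) = ((b : ℝ) * (b + 1) - a * (a + 1)) / 2 := by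
  have he : Finset.Ioc a b = Finset.Ico (a + 1) (b + 1) := by
    ext x; simp [Nat.lt_succ_iff, Nat.succ_le_iff]
  have g : ∀ n : ℕ, (∑ i ∈ Finset.range (n + 1), (i : ℝ)) = (n : ℝ) * (n + 1) / 2 := by
    intro n
    induction n with
    | zero => simp
    | succ k ih => rw [Finset.sum_range_succ, ih]; push_cast; ring
  rw [he, Finset.sum_Ico_eq_sub _ (by omega), g, g]
  ring

theorem arithmetic_identity (r m j : ℕ) (hr : 2 ≤ r) (hrm : r ≤ m) (hj1 : 1 ≤ j)
    (hjm : j ≤ m - 1) :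
    (1 / ((r : ℝ) * m)) *
        ∑ i ∈ Finset.Icc 1 (r - 1), ((r : ℝ) * m - 2 * |(m : ℝ) * i - r * j|) =
      (2 / (r : ℝ)) *
        (((r : ℝ) * j / m - ⌊(r : ℝ) * j / m⌋ - 1 / 2) ^ 2 +
          (r : ℝ) ^ 2 * j * (m - j) / m ^ 2 - 1 / 4) := by
  have hm2 : 2 ≤ m := hr.trans hrm
  have hmpos : 0 < m := by omega
  have hmR : (0 : ℝ) < m := by exact_mod_cast hmpos
  have hrR : (0 : ℝ) < r := by exact_mod_cast (by omega : 0 < r)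
  set q := r * j / m with hqdef
  have hq1 : m * q ≤ r * j := by
    rw [hqdef, mul_comm]; exact Nat.div_mul_le_self _ _
  have hq2 : r * j < m * q + m := by
    have h1 := Nat.div_add_mod (r * j) m
    have h2 := Nat.mod_lt (r * j) hmpos
    rw [hqdef]
    omega
  have hqr : q < r := by
    have h1 : r * j ≤ r * (m - 1) := Nat.mul_le_mul_left r hjm
    have h2 : r * (m - 1) < r * m :=
      mul_lt_mul_of_pos_left (by omega : m - 1 < m) (by omega : 0 < r)
    exact Nat.div_lt_iff_lt_mul hmpos |>.mpr (lt_of_le_of_lt h1 h2)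
  have hfloor : ⌊(r : ℝ) * j / m⌋ = (q : ℤ) := by
    rw [Int.floor_eq_iff]
    constructor
    · rw [le_div_iff₀ hmR]
      push_cast
      calc ((q : ℝ)) * m = (m : ℝ) * q := by ring
        _ ≤ r * j := by exact_mod_cast hq1
    · rw [div_lt_iff₀ hmR]
      push_cast
      calc ((r : ℝ) * j) < m * q + m := by exact_mod_cast hq2
        _ = ((q : ℝ) + 1) * m := by ring
  -- split the sum
  have hIcc : Finset.Icc 1 (r - 1) = Finset.Ioc 0 (r - 1) := by
    ext x; simp [Nat.succ_le_iff]
  have habs1 : ∀ i ∈ Finset.Ioc 0 q, |(m : ℝ) * i - r * j| = (r : ℝ) * j - m * i := by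
    intro i hi
    simp only [Finset.mem_Ioc] at hi
    rw [abs_sub_comm, abs_of_nonneg]
    have h1 : m * i ≤ r * j := le_trans (Nat.mul_le_mul_left m hi.2) hq1
    have : (m : ℝ) * i ≤ r * j := by exact_mod_cast h1
    linarith
  have habs2 : ∀ i ∈ Finset.Ioc q (r - 1), |(m : ℝ) * i - r * j| = (m : ℝ) * i - r * j := by
    intro i hi
    simp only [Finset.mem_Ioc] at hi
    rw [abs_of_nonneg]
    have h0 : r * j < m * (q + 1) := by rw [Nat.mul_succ]; omega
    have h1 : r * j < m * i := lt_of_lt_of_le h0 (Nat.mul_le_mul_left m hi.1)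
    have : (r : ℝ) * j < m * i := by exact_mod_cast h1
    linarith
  have hqle : q ≤ r - 1 := by omega
  have hS : (∑ i ∈ Finset.Icc 1 (r - 1), |(m : ℝ) * i - r * j|)
      = (∑ i ∈ Finset.Ioc 0 q, ((r : ℝ) * j - m * i))
        + (∑ i ∈ Finset.Ioc q (r - 1), ((m : ℝ) * i - r * j)) := by
    rw [hIcc, ← Finset.sum_Ioc_consecutive _ (Nat.zero_le q) hqle]
    congr 1
    · exact Finset.sum_congr rfl habs1
    · exact Finset.sum_congr rfl habs2
  have hcast1 : ((r - 1 : ℕ) : ℝ) = (r : ℝ) - 1 := by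
    rw [Nat.cast_sub (by omega)]; norm_num
  have hS1 : (∑ i ∈ Finset.Ioc 0 q, ((r : ℝ) * j - m * i))
      = (q : ℝ) * (r * j) - m * ((q : ℝ) * (q + 1)) / 2 := by
    rw [Finset.sum_sub_distrib, Finset.sum_const, ← Finset.mul_sum,
      sum_Ioc_id_real 0 q (Nat.zero_le q), Nat.card_Ioc, Nat.sub_zero, nsmul_eq_mul]
    push_cast
    ring
  have hS2 : (∑ i ∈ Finset.Ioc q (r - 1), ((m : ℝ) * i - r * j))
      = m * (((r : ℝ) - 1) * r - (q : ℝ) * (q + 1)) / 2 - ((r : ℝ) - 1 - q) * (r * j) := by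
    rw [Finset.sum_sub_distrib, Finset.sum_const, ← Finset.mul_sum,
      sum_Ioc_id_real q (r - 1) hqle, Nat.card_Ioc, nsmul_eq_mul]
    rw [Nat.cast_sub hqle, hcast1]
    ring
  have hsum : (∑ i ∈ Finset.Icc 1 (r - 1), ((r : ℝ) * m - 2 * |(m : ℝ) * i - r * j|))
      = ((r : ℝ) - 1) * (r * m)
        - 2 * ((q : ℝ) * (r * j) - m * ((q : ℝ) * (q + 1)) / 2
          + (m * (((r : ℝ) - 1) * r - (q : ℝ) * (q + 1)) / 2 - ((r : ℝ) - 1 - q) * (r * j))) := by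
    rw [Finset.sum_sub_distrib, Finset.sum_const, ← Finset.mul_sum, hS, hS1, hS2,
      Nat.card_Icc, Nat.add_sub_cancel, nsmul_eq_mul, hcast1]
  rw [hsum, hfloor]
  push_cast
  field_simp
  ring
end

section
/- Let r, m, j be integers with 2 ≤ r ≤ m, 1 ≤ j ≤ m−1, and suppose rj/m is not an integer. Then for each i with 1 ≤ i ≤ r−1, Σ_{k=1}^{rm} sign( sin(kπ(i/r − j/m)) · sin((k+1)π(i/r − j/m)) ) = rm − 2|mi − rj|. -/
open Real

lemma my_ediv_bounds (N x : ℤ) (hN : 0 < N) : N * (x / N) ≤ x ∧ x < N * (x / N) + N := by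
  have h := Int.mul_ediv_add_emod x N
  have h3 := Int.emod_nonneg x hN.ne'
  have h4 := Int.emod_lt_of_pos x hN
  omega

lemma my_ediv_eq {N x c : ℤ} (hN : 0 < N) (h1 : N * c ≤ x) (h2 : x < N * c + N) :
    x / N = c := by
  obtain ⟨g1, g2⟩ := my_ediv_bounds N x hN
  rcases lt_trichotomy (x / N) c with h5 | h5 | h5
  · nlinarith [mul_lt_mul_of_pos_left h5 hN]
  · exact h5
  · nlinarith [mul_lt_mul_of_pos_left h5 hN]

lemma my_sign_mul (a b : ℝ) : Real.sign (a * b) = Real.sign a * Real.sign b := by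
  obtain ha | rfl | ha := lt_trichotomy a 0 <;> obtain hb | rfl | hb := lt_trichotomy b 0
  · rw [Real.sign_of_pos (mul_pos_of_neg_of_neg ha hb), Real.sign_of_neg ha,
      Real.sign_of_neg hb]; ring
  · simp
  · rw [Real.sign_of_neg (mul_neg_of_neg_of_pos ha hb), Real.sign_of_neg ha,
      Real.sign_of_pos hb]; ring
  · simp
  · simp
  · simp
  · rw [Real.sign_of_neg (mul_neg_of_pos_of_neg ha hb), Real.sign_of_pos ha,
      Real.sign_of_neg hb]; ring
  · simp
  · rw [Real.sign_of_pos (mul_pos ha hb), Real.sign_of_pos ha, Real.sign_of_pos hb]; ring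

lemma my_sign_sin (n : ℤ) (t : ℝ) (h1 : (n : ℝ) < t) (h2 : t < n + 1) :
    Real.sign (Real.sin (π * t)) = (-1 : ℝ) ^ n := by
  have key : Real.sin (π * t) = (-1 : ℝ) ^ n * Real.sin (π * (t - n)) := by
    rw [← Real.sin_add_int_mul_pi (π * (t - n)) n]; ring_nf
  have hpos : 0 < Real.sin (π * (t - n)) :=
    Real.sin_pos_of_pos_of_lt_pi (by nlinarith [pi_pos]) (by nlinarith [pi_pos])
  rw [key]
  rcases Int.even_or_odd n with he | ho
  · rw [he.neg_one_zpow, one_mul, Real.sign_of_pos hpos]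
  · rw [ho.neg_one_zpow, Real.sign_of_neg (by nlinarith)]

lemma term_eq (N D k : ℤ) (hD : 0 < D) (hDN : D < N) :
    Real.sign (Real.sin (π * (((k * D : ℤ) : ℝ) / (N : ℝ))) *
        Real.sin (π * ((((k + 1) * D : ℤ) : ℝ) / (N : ℝ)))) =
      ((1 - 2 * (((k + 1) * D) / N - (k * D) / N) - (if N ∣ k * D then 1 else 0)
        + (if N ∣ (k + 1) * D then 1 else 0) : ℤ) : ℝ) := by
  have hN : 0 < N := hD.trans hDN
  have hNR : (0 : ℝ) < (N : ℝ) := by exact_mod_cast hN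
  have hNdvdD : ¬ N ∣ D := fun h => absurd (Int.le_of_dvd hD h) (not_le.2 hDN)
  obtain ⟨ha1, ha2⟩ := my_ediv_bounds N (k * D) hN
  obtain ⟨hb1, hb2⟩ := my_ediv_bounds N ((k + 1) * D) hN
  set a := (k * D) / N with ha_def
  set b := ((k + 1) * D) / N with hb_def
  have hdiff : (k + 1) * D = k * D + D := by ring
  by_cases hA : N ∣ k * D
  · have hB : ¬ N ∣ (k + 1) * D := by
      intro h
      exact hNdvdD (by simpa [hdiff] using dvd_sub h hA)
    obtain ⟨c, hc⟩ := hA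
    have hNa : N * a = k * D := by
      rw [ha_def, hc, Int.mul_ediv_cancel_left c hN.ne']
    have hb : b = a := by
      rw [hb_def]
      exact my_ediv_eq hN (by linarith) (by linarith)
    have hsin : Real.sin (π * (((k * D : ℤ) : ℝ) / (N : ℝ))) = 0 := by
      have heq : ((k * D : ℤ) : ℝ) / (N : ℝ) = (c : ℝ) := by
        rw [hc]; push_cast; field_simp
      rw [heq, mul_comm, Real.sin_int_mul_pi]
    have hA' : N ∣ k * D := ⟨c, hc⟩
    rw [hsin, zero_mul, Real.sign_zero, if_pos hA', if_neg hB, hb]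
    push_cast; ring
  · by_cases hB : N ∣ (k + 1) * D
    · obtain ⟨c, hc⟩ := hB
      have hNb : N * b = (k + 1) * D := by
        rw [hb_def, hc, Int.mul_ediv_cancel_left c hN.ne']
      have hNb1 : N * (b - 1) = N * b - N := by ring
      have ha : a = b - 1 := by
        rw [ha_def]
        exact my_ediv_eq hN (by linarith) (by linarith)
      have hsin : Real.sin (π * ((((k + 1) * D : ℤ) : ℝ) / (N : ℝ))) = 0 := by
        have heq : (((k + 1) * D : ℤ) : ℝ) / (N : ℝ) = (c : ℝ) := by
          rw [hc]; push_cast; field_simp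
        rw [heq, mul_comm, Real.sin_int_mul_pi]
      have hB' : N ∣ (k + 1) * D := ⟨c, hc⟩
      rw [hsin, mul_zero, Real.sign_zero, if_neg hA, if_pos hB', ha]
      push_cast; ring
    · have ha1' : N * a < k * D :=
        lt_of_le_of_ne ha1 (fun h => hA ⟨a, h.symm⟩)
      have hb1' : N * b < (k + 1) * D :=
        lt_of_le_of_ne hb1 (fun h => hB ⟨b, h.symm⟩)
      have hcast : ∀ x y : ℤ, x < y → (x : ℝ) < (y : ℝ) := fun x y h => by exact_mod_cast h
      have ht1l : (a : ℝ) < ((k * D : ℤ) : ℝ) / (N : ℝ) := by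
        rw [lt_div_iff₀ hNR]; have := hcast _ _ ha1'; push_cast at this ⊢; linarith
      have ht1r : ((k * D : ℤ) : ℝ) / (N : ℝ) < (a : ℝ) + 1 := by
        rw [div_lt_iff₀ hNR]; have := hcast _ _ ha2; push_cast at this ⊢; linarith
      have ht2l : (b : ℝ) < (((k + 1) * D : ℤ) : ℝ) / (N : ℝ) := by
        rw [lt_div_iff₀ hNR]; have := hcast _ _ hb1'; push_cast at this ⊢; linarith
      have ht2r : (((k + 1) * D : ℤ) : ℝ) / (N : ℝ) < (b : ℝ) + 1 := by
        rw [div_lt_iff₀ hNR]; have := hcast _ _ hb2; push_cast at this ⊢; linarith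
      rw [my_sign_mul, my_sign_sin a _ ht1l ht1r, my_sign_sin b _ ht2l ht2r,
        if_neg hA, if_neg hB]
      have hab1 : a ≤ b := by
        have h1 : N * a < N * (b + 1) := by
          have : N * (b + 1) = N * b + N := by ring
          linarith
        have := lt_of_mul_lt_mul_left h1 hN.le
        omega
      have hab2 : b ≤ a + 1 := by
        have h1 : N * b < N * (a + 2) := by
          have : N * (a + 2) = N * a + N + N := by ring
          linarith
        have := lt_of_mul_lt_mul_left h1 hN.le
        omega
      have hne : (-1 : ℝ) ≠ 0 := by norm_num
      rcases (by omega : b = a ∨ b = a + 1) with hb | hb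
      · rw [hb, ← zpow_add₀ hne]
        rw [Even.neg_one_zpow ⟨a, by ring⟩]
        push_cast; ring
      · rw [hb, ← zpow_add₀ hne]
        rw [Odd.neg_one_zpow ⟨a, by ring⟩]
        push_cast; ring

lemma my_tele_sum (g : ℕ → ℤ) (n : ℕ) :
    ∑ k ∈ Finset.Icc 1 n, (g (k + 1) - g k) = g (n + 1) - g 1 := by
  induction n with
  | zero => simp
  | succ n ih =>
      rw [← Finset.insert_Icc_right_eq_Icc_add_one (by omega : 1 ≤ n + 1),
        Finset.sum_insert (by simp only [Finset.mem_Icc]; omega), ih]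
      ring

lemma my_sum_eq (N D : ℤ) (n : ℕ) (hn : (n : ℤ) = N) (hD : 0 < D) (hDN : D < N) :
    ∑ k ∈ Finset.Icc 1 n,
      (1 - 2 * ((((k : ℤ) + 1) * D) / N - ((k : ℤ) * D) / N)
        - (if N ∣ (k : ℤ) * D then 1 else 0)
        + (if N ∣ ((k : ℤ) + 1) * D then 1 else 0)) = N - 2 * D := by
  have hN : 0 < N := hD.trans hDN
  have hNdvdD : ¬ N ∣ D := fun h => absurd (Int.le_of_dvd hD h) (not_le.2 hDN)
  set F : ℕ → ℤ := fun k =>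
    (k : ℤ) - 2 * (((k : ℤ) * D) / N) + (if N ∣ (k : ℤ) * D then 1 else 0) with hF
  have step : ∀ k ∈ Finset.Icc 1 n,
      (1 - 2 * ((((k : ℤ) + 1) * D) / N - ((k : ℤ) * D) / N)
        - (if N ∣ (k : ℤ) * D then 1 else 0)
        + (if N ∣ ((k : ℤ) + 1) * D then 1 else 0)) = F (k + 1) - F k := by
    intro k _
    simp only [hF]
    push_cast
    ring
  rw [Finset.sum_congr rfl step, my_tele_sum]
  have hD0 : D / N = 0 := my_ediv_eq hN (by simpa using hD.le) (by simpa using hDN)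
  have hND : ((n : ℤ) + 1) * D / N = D := by
    rw [hn]; exact my_ediv_eq hN (by nlinarith) (by nlinarith)
  have hNd1 : ¬ N ∣ ((n : ℤ) + 1) * D := by
    rw [hn]; intro h; apply hNdvdD
    have h2 : (N + 1) * D - N * D = D := by ring
    exact h2 ▸ dvd_sub h (dvd_mul_right N D)
  have hNdvdD' : ¬ N ∣ (1 : ℤ) * D := by rwa [one_mul]
  simp only [hF]
  push_cast
  rw [hND, if_neg hNd1, if_neg hNdvdD', one_mul, hD0]
  omega

theorem sign_sum_identity (r m j : ℕ) (hr : 2 ≤ r) (hrm : r ≤ m) (hj1 : 1 ≤ j)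
    (hjm : j ≤ m - 1) (hnotint : ¬ (m : ℤ) ∣ (r * j : ℤ))
    (i : ℕ) (hi1 : 1 ≤ i) (hi2 : i ≤ r - 1) :
    ∑ k ∈ Finset.Icc 1 (r * m),
        Real.sign (Real.sin (k * π * ((i : ℝ) / r - (j : ℝ) / m)) *
          Real.sin ((k + 1) * π * ((i : ℝ) / r - (j : ℝ) / m))) =
      (r : ℝ) * m - 2 * |(m : ℝ) * i - r * j| := by
  set d : ℤ := (m : ℤ) * i - (r : ℤ) * j with hd_def
  set N : ℤ := (r : ℤ) * m with hN_def
  have hd0 : d ≠ 0 := by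
    intro h
    rw [hd_def] at h
    exact hnotint ⟨(i : ℤ), by linarith⟩
  have hi' : (i : ℤ) ≤ (r : ℤ) - 1 := by omega
  have hj' : (j : ℤ) ≤ (m : ℤ) - 1 := by omega
  have hi1' : (1 : ℤ) ≤ (i : ℤ) := by omega
  have hj1' : (1 : ℤ) ≤ (j : ℤ) := by omega
  have hr' : (2 : ℤ) ≤ (r : ℤ) := by omega
  have hm' : (2 : ℤ) ≤ (m : ℤ) := by omega
  have hub : (m : ℤ) * i ≤ (m : ℤ) * ((r : ℤ) - 1) :=
    mul_le_mul_of_nonneg_left hi' (by omega)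
  have hub2 : (r : ℤ) * j ≤ (r : ℤ) * ((m : ℤ) - 1) :=
    mul_le_mul_of_nonneg_left hj' (by omega)
  have hlb : (m : ℤ) * 1 ≤ (m : ℤ) * i := mul_le_mul_of_nonneg_left hi1' (by omega)
  have hlb2 : (r : ℤ) * 1 ≤ (r : ℤ) * j := mul_le_mul_of_nonneg_left hj1' (by omega)
  have habs : |d| < N := by
    rw [hd_def, hN_def, abs_lt]
    constructor <;> nlinarith
  set D : ℤ := |d| with hD_def
  have hD : 0 < D := abs_pos.2 hd0
  have hr0 : (r : ℝ) ≠ 0 := Nat.cast_ne_zero.2 (by omega)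
  have hm0 : (m : ℝ) ≠ 0 := Nat.cast_ne_zero.2 (by omega)
  have hNR0 : (N : ℝ) ≠ 0 := by
    have : (0 : ℤ) < N := lt_of_le_of_lt (abs_nonneg d) habs
    exact_mod_cast this.ne'
  have hθ : (i : ℝ) / r - (j : ℝ) / m = (d : ℝ) / (N : ℝ) := by
    rw [hd_def, hN_def]
    push_cast
    field_simp
  have key : ∀ k : ℕ,
      Real.sign (Real.sin (k * π * ((i : ℝ) / r - (j : ℝ) / m)) *
          Real.sin ((k + 1) * π * ((i : ℝ) / r - (j : ℝ) / m))) =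
        ((1 - 2 * ((((k : ℤ) + 1) * D) / N - ((k : ℤ) * D) / N)
          - (if N ∣ (k : ℤ) * D then 1 else 0)
          + (if N ∣ ((k : ℤ) + 1) * D then 1 else 0) : ℤ) : ℝ) := by
    intro k
    rw [hθ]
    rcases abs_cases d with ⟨h1, _⟩ | ⟨h1, _⟩
    · -- D = d
      have hdR : (d : ℝ) = ((D : ℤ) : ℝ) := by rw [hD_def, h1]
      rw [hdR,
        show (k : ℝ) * π * (((D : ℤ) : ℝ) / (N : ℝ))
            = π * ((((k : ℤ) * D : ℤ) : ℝ) / (N : ℝ)) by push_cast; ring,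
        show ((k : ℝ) + 1) * π * (((D : ℤ) : ℝ) / (N : ℝ))
            = π * (((((k : ℤ) + 1) * D : ℤ) : ℝ) / (N : ℝ)) by push_cast; ring]
      exact term_eq N D (k : ℤ) hD habs
    · -- D = -d
      have hdR : (d : ℝ) = -((D : ℤ) : ℝ) := by
        rw [hD_def, h1]; push_cast; ring
      rw [hdR,
        show (k : ℝ) * π * (-((D : ℤ) : ℝ) / (N : ℝ))
            = -(π * ((((k : ℤ) * D : ℤ) : ℝ) / (N : ℝ))) by push_cast; ring,
        show ((k : ℝ) + 1) * π * (-((D : ℤ) : ℝ) / (N : ℝ))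
            = -(π * (((((k : ℤ) + 1) * D : ℤ) : ℝ) / (N : ℝ))) by push_cast; ring,
        Real.sin_neg, Real.sin_neg, neg_mul_neg]
      exact term_eq N D (k : ℤ) hD habs
  rw [Finset.sum_congr rfl (fun k _ => key k), ← Int.cast_sum,
    my_sum_eq N D (r * m) (by rw [hN_def]; push_cast; ring) hD habs]
  rw [hD_def, hd_def, hN_def]
  push_cast
  ring
end

section
/- Let B ∈ SL(2,ℤ) be the matrix [[−3,2],[−2,1]]. Then −J·Σ_{k=1}^{n}(B^k − B^{−k}) = ((−1)ⁿ(2n+1) − 1)·[[−1,1],[1,−1]], where J = [[0,1],[−1,0]]. -/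
open Matrix

private lemma binv : (!![-3, 2; -2, 1] : Matrix (Fin 2) (Fin 2) ℤ)⁻¹ = !![1, -2; 2, -3] := by
  apply Matrix.inv_eq_right_inv
  decide

private lemma bpow : ∀ k : ℕ, (!![-3, 2; -2, 1] : Matrix (Fin 2) (Fin 2) ℤ) ^ k =
    (-1 : ℤ) ^ k • !![1 + 2 * (k:ℤ), -(2 * k); 2 * k, 1 - 2 * k] := by
  intro k
  induction k with
  | zero => simp; decide
  | succ k ih =>
    rw [pow_succ, ih]
    push_cast
    ext i j
    fin_cases i <;> fin_cases j <;>
      simp [Matrix.mul_apply, Fin.sum_univ_succ] <;> ring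

private lemma cpow : ∀ k : ℕ, (!![1, -2; 2, -3] : Matrix (Fin 2) (Fin 2) ℤ) ^ k =
    (-1 : ℤ) ^ k • !![1 - 2 * (k:ℤ), 2 * k; -(2 * k), 1 + 2 * k] := by
  intro k
  induction k with
  | zero => simp; decide
  | succ k ih =>
    rw [pow_succ, ih]
    push_cast
    ext i j
    fin_cases i <;> fin_cases j <;>
      simp [Matrix.mul_apply, Fin.sum_univ_succ] <;> ring

private lemma sumid : ∀ n : ℕ, ∑ k ∈ Finset.Icc 1 n, ((-1 : ℤ) ^ k * (4 * k)) =
    (-1 : ℤ) ^ n * (2 * n + 1) - 1 := by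
  intro n
  induction n with
  | zero => simp
  | succ n ih =>
    rw [Finset.sum_Icc_succ_top (by omega), ih]
    push_cast
    ring

theorem twist_product_signature_sum (n : ℕ) :
    let B : Matrix (Fin 2) (Fin 2) ℤ := !![-3, 2; -2, 1]
    let J : Matrix (Fin 2) (Fin 2) ℤ := !![0, 1; -1, 0]
    (-J) * (∑ k ∈ Finset.Icc 1 n, (B ^ k - B⁻¹ ^ k)) =
      ((-1 : ℤ) ^ n * (2 * n + 1) - 1) • !![-1, 1; 1, -1] := by
  intro B J
  have hdiff : ∀ k : ℕ, B ^ k - B⁻¹ ^ k = ((-1 : ℤ) ^ k * (4 * k)) • !![1, -1; 1, -1] := by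
    intro k
    show (!![-3, 2; -2, 1] : Matrix (Fin 2) (Fin 2) ℤ) ^ k - _ = _
    rw [binv, bpow, cpow]
    ext i j
    fin_cases i <;> fin_cases j <;> simp <;> ring
  have : (∑ k ∈ Finset.Icc 1 n, (B ^ k - B⁻¹ ^ k)) =
      ((-1 : ℤ) ^ n * (2 * n + 1) - 1) • !![1, -1; 1, -1] := by
    rw [← sumid n, Finset.sum_smul]
    exact Finset.sum_congr rfl fun k _ => hdiff k
  rw [this, Matrix.mul_smul]
  congr 1
  show (-(!![0, 1; -1, 0] : Matrix (Fin 2) (Fin 2) ℤ)) * _ = _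
  decide
end

section
/- Let G be a group and suppose elements t₁, …, t_{2g+1} ∈ G satisfy the braid relations (t_i t_j = t_j t_i if |i−j| ≥ 2, t_i t_{i+1} t_i = t_{i+1} t_i t_{i+1}), together with an element t_{2g+2} with (t_{2g}⋯t_2)^{2g} = t_{2g+2}², and suppose the hyperelliptic relation t_{2g+1}² t_{2g} ⋯ t_2 t_1² = (t_{2g}⋯t_2)^{−1} holds. Then for any homogeneous quasimorphism φ on G such that all t_i (1 ≤ i ≤ 2g+2) are mutually conjugate in G, one has D(φ) ≥ (2g + 3 + 1/g)·|φ(t₁)|. -/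
namespace DefectAux

variable {G : Type*} [Group G]

/-- If `|n * e| ≤ K` for all naturals `n`, then `e = 0`. -/
lemma eq_zero_of_abs_nat_mul_le {e K : ℝ} (h : ∀ n : ℕ, |(n : ℝ) * e| ≤ K) : e = 0 := by
  by_contra he
  have he' : 0 < |e| := abs_pos.mpr he
  obtain ⟨n, hn⟩ := exists_nat_gt (K / |e|)
  have h2 : K < (n : ℝ) * |e| := by
    rw [div_lt_iff₀ he'] at hn; linarith
  have h3 := h n
  rw [abs_mul, Nat.abs_cast] at h3
  linarith

section QM

variable (φ : G → ℝ) (D : ℝ)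
variable (hq : ∀ x y : G, |φ (x * y) - φ x - φ y| ≤ D)
variable (hhom : ∀ (x : G) (n : ℤ), φ (x ^ n) = n * φ x)

include hhom

lemma qm_one : φ 1 = 0 := by
  have := hhom 1 0
  simpa using this

lemma qm_inv (x : G) : φ x⁻¹ = - φ x := by
  have := hhom x (-1)
  simpa using this

lemma qm_npow (x : G) (n : ℕ) : φ (x ^ n) = n * φ x := by
  have := hhom x (n : ℤ)
  rw [zpow_natCast] at this
  simpa using this

include hq

lemma qm_conj (w x : G) : φ (w * x * w⁻¹) = φ x := by
  have hpow : ∀ n : ℕ, (w * x * w⁻¹) ^ n = w * x ^ n * w⁻¹ := by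
    intro n
    induction n with
    | zero => simp
    | succ n ih => rw [pow_succ, pow_succ, ih]; group
  have key : ∀ n : ℕ, |(n : ℝ) * (φ (w * x * w⁻¹) - φ x)| ≤ 2 * D := by
    intro n
    have t1 := hq w (x ^ n * w⁻¹)
    have t2 := hq (x ^ n) w⁻¹
    have hinv : φ w⁻¹ = - φ w := qm_inv φ hhom w
    have h1 : φ ((w * x * w⁻¹) ^ n) = (n : ℝ) * φ (w * x * w⁻¹) := qm_npow φ hhom _ n
    have h2 : φ (x ^ n) = (n : ℝ) * φ x := qm_npow φ hhom x n
    have h3 : (w * x * w⁻¹) ^ n = w * (x ^ n * w⁻¹) := by rw [hpow n, mul_assoc]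
    rw [h3] at h1
    rw [abs_le] at t1 t2 ⊢
    constructor <;> nlinarith [t1.1, t1.2, t2.1, t2.2]
  have := eq_zero_of_abs_nat_mul_le key
  linarith

lemma qm_isConj {x y : G} (h : IsConj x y) : φ x = φ y := by
  obtain ⟨c, hc⟩ := isConj_iff.mp h
  rw [← hc, qm_conj φ D hq hhom]

lemma qm_commute {x y : G} (h : Commute x y) : φ (x * y) = φ x + φ y := by
  have key : ∀ n : ℕ, |(n : ℝ) * (φ (x * y) - φ x - φ y)| ≤ D := by
    intro n
    have t1 := hq (x ^ n) (y ^ n)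
    have h1 : φ ((x * y) ^ n) = (n : ℝ) * φ (x * y) := qm_npow φ hhom _ n
    have h2 : φ (x ^ n) = (n : ℝ) * φ x := qm_npow φ hhom x n
    have h3 : φ (y ^ n) = (n : ℝ) * φ y := qm_npow φ hhom y n
    rw [h.mul_pow n] at h1
    rw [abs_le] at t1 ⊢
    constructor <;> nlinarith [t1.1, t1.2]
  have := eq_zero_of_abs_nat_mul_le key
  linarith

lemma qm_list_prod : ∀ (l : List G), l.Pairwise Commute → φ l.prod = (l.map φ).sum := by
  intro l hl
  induction l with
  | nil => simpa using qm_one φ hhom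
  | cons x l ih =>
    rw [List.pairwise_cons] at hl
    have hc : Commute x l.prod := Commute.list_prod_right l x hl.1
    rw [List.prod_cons, qm_commute φ D hq hhom hc, ih hl.2, List.map_cons, List.sum_cons]

end QM

lemma isConj_mul_comm (x y : G) : IsConj (x * y) (y * x) :=
  isConj_iff.mpr ⟨x⁻¹, by group⟩

/-- `[k, k-1, ..., 1]`. -/
def myDesc : ℕ → List ℕ
  | 0 => []
  | n + 1 => (n + 1) :: myDesc n

/-- `[M, M-1, ..., M-n+1]`. -/
def down : ℕ → ℕ → List ℕ
  | _, 0 => []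
  | M, n + 1 => M :: down (M - 1) n

lemma mem_myDesc : ∀ (k x : ℕ), x ∈ myDesc k ↔ 1 ≤ x ∧ x ≤ k := by
  intro k
  induction k with
  | zero => intro x; simp [myDesc]; omega
  | succ k ih => intro x; simp [myDesc, ih]; omega

lemma nodup_myDesc : ∀ k : ℕ, (myDesc k).Nodup := by
  intro k
  induction k with
  | zero => simp [myDesc]
  | succ k ih =>
    simp only [myDesc, List.nodup_cons]
    refine ⟨fun h => ?_, ih⟩
    have := (mem_myDesc k (k+1)).mp h
    omega

lemma down_concat : ∀ (n M : ℕ), down M (n + 1) = down M n ++ [M - n] := by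
  intro n
  induction n with
  | zero => intro M; simp [down]
  | succ n ih =>
    intro M
    have h1 : M - 1 - n = M - (n + 1) := by omega
    show M :: down (M-1) (n+1) = (M :: down (M-1) n) ++ [M - (n+1)]
    rw [ih (M-1), h1]
    simp

lemma myDesc_eq_down : ∀ k : ℕ, myDesc k = down k k := by
  intro k
  induction k with
  | zero => rfl
  | succ k ih =>
    show (k+1) :: myDesc k = (k+1) :: down (k+1-1) k
    rw [ih]
    norm_num

lemma range_map_sub : ∀ (n M : ℕ), (List.range n).map (fun k => M - k) = down M n := by
  intro n
  induction n with
  | zero => intro M; simp [down]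
  | succ n ih =>
    intro M
    rw [List.range_succ_eq_map, List.map_cons, List.map_map]
    have hf : ((fun k => M - k) ∘ Nat.succ) = (fun k => (M - 1) - k) := by
      funext k; simp [Function.comp]; omega
    rw [hf, ih (M-1)]
    simp [down]

/-- The core reordering lemma: any permutation of the blocks `b 1, ..., b k`
(with blocks commuting at distance ≥ 2) times a pendant `q` commuting with
`b 1, ..., b (k-1)` is conjugate to the descending arrangement times `q`. -/
theorem reorder (b : ℕ → G) (hb : ∀ i j : ℕ, i + 2 ≤ j → Commute (b i) (b j)) :
    ∀ (k : ℕ) (q : G), (∀ j, j < k → Commute (b j) q) →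
      ∀ (r : List ℕ), r.Perm (myDesc k) →
      IsConj ((r.map b).prod * q) (((myDesc k).map b).prod * q) := by
  intro k
  induction k with
  | zero =>
    intro q hq r hr
    have : r = [] := hr.eq_nil
    subst this
    exact IsConj.refl _
  | succ k ih =>
    intro q hq r hr
    have hmem : (k + 1) ∈ r := hr.mem_iff.mpr (by simp [myDesc])
    obtain ⟨xs, ys, rfl⟩ := List.append_of_mem hmem
    have hperm : (xs ++ ys).Perm (myDesc k) := by
      have h1 : ((k+1) :: (xs ++ ys)).Perm ((k+1) :: myDesc k) :=
        (List.perm_middle.symm.trans hr)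
      exact h1.cons_inv
    have hbound : ∀ x ∈ xs ++ ys, 1 ≤ x ∧ x ≤ k := by
      intro x hx
      exact (mem_myDesc k x).mp (hperm.mem_iff.mp hx)
    have hnd : (xs ++ ys).Nodup := (hperm.symm.nodup (nodup_myDesc k))
    have hqP : Commute ((myDesc k).map b).prod q := by
      refine (Commute.list_prod_right _ _ ?_).symm
      intro z hz
      obtain ⟨j, hj, rfl⟩ := List.mem_map.mp hz
      have := (mem_myDesc k j).mp hj
      exact (hq j (by omega)).symm
    have htgt : ((myDesc (k+1)).map b).prod * q = b (k+1) * (((myDesc k).map b).prod * q) := by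
      show ((b (k+1) :: (myDesc k).map b).prod) * q = _
      rw [List.prod_cons, mul_assoc]
    rcases Nat.eq_zero_or_pos k with rfl | hkpos
    · -- k = 0 : r = [1]
      have hxs : xs = [] := by
        have := hperm.eq_nil
        exact List.append_eq_nil_iff.mp this |>.1
      have hys : ys = [] := by
        have := hperm.eq_nil
        exact List.append_eq_nil_iff.mp this |>.2
      subst hxs; subst hys
      exact IsConj.refl _
    · have hkmem : k ∈ xs ++ ys := hperm.mem_iff.mpr ((mem_myDesc k k).mpr ⟨hkpos, le_refl k⟩)
      by_cases hk : k ∈ xs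
      · -- move b (k+1) to the right past ys
        have hys2 : ∀ y ∈ ys, y + 2 ≤ k + 1 := by
          intro y hy
          have h1 := hbound y (List.mem_append.mpr (Or.inr hy))
          have h2 : y ≠ k := by
            intro h; subst h
            have hdisj := (List.nodup_append'.mp hnd).2.2
            exact hdisj hk hy
          omega
        have hcomm1 : Commute (b (k+1)) ((ys.map b).prod) := by
          refine Commute.list_prod_right _ _ ?_
          intro z hz
          obtain ⟨y, hy, rfl⟩ := List.mem_map.mp hz
          exact (hb y (k+1) (hys2 y hy)).symm
        have heq1 : (((xs ++ (k+1) :: ys)).map b).prod * q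
            = ((xs ++ ys).map b).prod * (b (k+1) * q) := by
          rw [List.map_append, List.prod_append, List.map_cons, List.prod_cons,
            List.map_append, List.prod_append]
          rw [← mul_assoc, ← mul_assoc]
          congr 1
          rw [mul_assoc, hcomm1.eq, ← mul_assoc]
        have hq' : ∀ j, j < k → Commute (b j) (b (k+1) * q) := by
          intro j hj
          exact (hb j (k+1) (by omega)).mul_right (hq j (by omega))
        have hIH := ih (b (k+1) * q) hq' (xs ++ ys) hperm
        rw [heq1]
        refine hIH.trans ?_
        have hrot : IsConj (((myDesc k).map b).prod * (b (k+1) * q))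
            ((b (k+1) * q) * ((myDesc k).map b).prod) := isConj_mul_comm _ _
        refine hrot.trans ?_
        have : (b (k+1) * q) * ((myDesc k).map b).prod
            = b (k+1) * (((myDesc k).map b).prod * q) := by
          rw [mul_assoc, hqP.symm.eq]
        rw [this, ← htgt]
      · -- k ∈ ys; move b (k+1) to the left past xs
        have hkys : k ∈ ys := by
          rcases List.mem_append.mp hkmem with h | h
          · exact absurd h hk
          · exact h
        have hxs2 : ∀ x ∈ xs, x + 2 ≤ k + 1 := by
          intro x hx
          have h1 := hbound x (List.mem_append.mpr (Or.inl hx))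
          have h2 : x ≠ k := fun h => hk (h ▸ hx)
          omega
        have hcomm2 : Commute ((xs.map b).prod) (b (k+1)) := by
          refine (Commute.list_prod_right _ _ ?_).symm
          intro z hz
          obtain ⟨x, hx, rfl⟩ := List.mem_map.mp hz
          exact (hb x (k+1) (hxs2 x hx)).symm
        have heq2 : (((xs ++ (k+1) :: ys)).map b).prod * q
            = b (k+1) * (((xs ++ ys).map b).prod * q) := by
          simp only [List.map_append, List.prod_append, List.map_cons, List.prod_cons]
          rw [← mul_assoc, hcomm2.eq]
          simp [mul_assoc]
        rw [heq2]
        have hrot : IsConj (b (k+1) * (((xs ++ ys).map b).prod * q))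
            ((((xs ++ ys).map b).prod * q) * b (k+1)) := isConj_mul_comm _ _
        refine hrot.trans ?_
        have heq3 : (((xs ++ ys).map b).prod * q) * b (k+1)
            = ((xs ++ ys).map b).prod * (q * b (k+1)) := by rw [mul_assoc]
        have hq'' : ∀ j, j < k → Commute (b j) (q * b (k+1)) := by
          intro j hj
          exact (hq j (by omega)).mul_right (hb j (k+1) (by omega))
        rw [heq3]
        refine (ih (q * b (k+1)) hq'' (xs ++ ys) hperm).trans ?_
        have heq4 : ((myDesc k).map b).prod * (q * b (k+1))
            = (((myDesc k).map b).prod * q) * b (k+1) := by rw [mul_assoc]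
        rw [heq4]
        refine (isConj_mul_comm _ _).trans ?_
        rw [htgt]

lemma list_sum_const {l : List ℕ} {f : ℕ → ℝ} {aa : ℝ} (h : ∀ i ∈ l, f i = aa) :
    (l.map f).sum = l.length * aa := by
  induction l with
  | nil => simp
  | cons x l ih =>
    rw [List.map_cons, List.sum_cons, h x (by simp), ih (fun i hi => h i (by simp [hi]))]
    simp [List.length_cons]
    push_cast
    ring

/-- odds ++ evens is a permutation of the descending run. -/
lemma odds_evens_perm : ∀ a : ℕ,
    (((List.range a).map (fun j => 2*j+3)) ++ ((List.range (a+1)).map (fun j => 2*j+2))).Perm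
      (down (2*a+2) (2*a+1)) := by
  intro a
  induction a with
  | zero => simp [down, List.range_succ]
  | succ a ih =>
    have hO : (List.range (a+1)).map (fun j => 2*j+3)
        = ((List.range a).map (fun j => 2*j+3)) ++ [2*a+3] := by
      rw [List.range_succ, List.map_append]; rfl
    have hE : (List.range (a+2)).map (fun j => 2*j+2)
        = ((List.range (a+1)).map (fun j => 2*j+2)) ++ [2*a+4] := by
      rw [List.range_succ, List.map_append]; rfl
    have hD : down (2*(a+1)+2) (2*(a+1)+1) = (2*a+4) :: (2*a+3) :: down (2*a+2) (2*a+1) := by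
      show down (2*a+4) (2*a+3) = _
      show (2*a+4) :: down (2*a+4-1) (2*a+2) = _
      have h1 : 2*a+4-1 = 2*a+3 := by omega
      rw [h1]
      show (2*a+4) :: (2*a+3) :: down (2*a+3-1) (2*a+1) = _
      have h2 : 2*a+3-1 = 2*a+2 := by omega
      rw [h2]
    rw [hO, hE, hD]
    set O := (List.range a).map (fun j => 2*j+3) with hOdef
    set E := (List.range (a+1)).map (fun j => 2*j+2) with hEdef
    have p1 : (O ++ [2*a+3]) ++ (E ++ [2*a+4]) = (O ++ ((2*a+3) :: E)) ++ [2*a+4] := by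
      simp [List.append_assoc]
    rw [p1]
    have p2 : ((O ++ ((2*a+3) :: E)) ++ [2*a+4]).Perm ((2*a+4) :: (O ++ ((2*a+3) :: E))) :=
      List.perm_append_singleton _ _
    have p3 : ((2*a+4) :: (O ++ ((2*a+3) :: E))).Perm ((2*a+4) :: (2*a+3) :: (O ++ E)) :=
      List.Perm.cons _ List.perm_middle
    exact p2.trans (p3.trans (List.Perm.cons _ (List.Perm.cons _ ih)))

end DefectAux

/-- The descending product `t (2g) * t (2g-1) * ⋯ * t 2`. -/
def descChain {G : Type*} [Group G] (t : ℕ → G) (g : ℕ) : G :=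
  ((List.range (2 * g - 1)).map (fun k => t (2 * g - k))).prod

theorem defect_lower_bound_hyperelliptic {G : Type*} [Group G] (g : ℕ) (hg : 1 ≤ g)
    (t : ℕ → G)
    (hcomm : ∀ i j : ℕ, 1 ≤ i → i ≤ 2 * g + 1 → 1 ≤ j → j ≤ 2 * g + 1 →
      (i + 2 ≤ j ∨ j + 2 ≤ i) → t i * t j = t j * t i)
    (hbraid : ∀ i : ℕ, 1 ≤ i → i + 1 ≤ 2 * g + 1 →
      t i * t (i + 1) * t i = t (i + 1) * t i * t (i + 1))
    (hchain : (descChain t g) ^ (2 * g) = (t (2 * g + 2)) ^ 2)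
    (hhyper : (t (2 * g + 1)) ^ 2 * descChain t g * (t 1) ^ 2 = (descChain t g)⁻¹)
    (hconjall : ∀ i j : ℕ, 1 ≤ i → i ≤ 2 * g + 2 → 1 ≤ j → j ≤ 2 * g + 2 →
      IsConj (t i) (t j))
    (φ : G → ℝ) (D : ℝ) (hD0 : 0 ≤ D)
    (hq : ∀ x y : G, |φ (x * y) - φ x - φ y| ≤ D)
    (hDleast : ∀ C : ℝ, 0 ≤ C → (∀ x y : G, |φ (x * y) - φ x - φ y| ≤ C) → D ≤ C)
    (hhom : ∀ (x : G) (n : ℤ), φ (x ^ n) = n * φ x) :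
    (2 * (g : ℝ) + 3 + 1 / g) * |φ (t 1)| ≤ D := by
  classical
  set c := descChain t g with hc
  set a := φ (t 1) with ha
  have hgR : (0:ℝ) < (g:ℝ) := by exact_mod_cast Nat.lt_of_lt_of_le Nat.zero_lt_one hg
  have hbt : ∀ i j : ℕ, 1 ≤ i → j ≤ 2*g+1 → i + 2 ≤ j → Commute (t i) (t j) := by
    intro i j h1 h2 h3
    exact hcomm i j h1 (by omega) (by omega) h2 (Or.inl h3)
  have hφt : ∀ i : ℕ, 1 ≤ i → i ≤ 2*g+2 → φ (t i) = a := by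
    intro i h1 h2
    exact DefectAux.qm_isConj φ D hq hhom (hconjall i 1 h1 h2 (by omega) (by omega))
  -- the block function
  set b : ℕ → G := fun i => if i = 1 then t 1 ^ 2 else if i = 2*g+1 then t (2*g+1) ^ 2
      else if 2 ≤ i ∧ i ≤ 2*g then t i else 1 with hbdef
  have hne1 : (2*g+1 : ℕ) ≠ 1 := by omega
  have hbval1 : b 1 = t 1 ^ 2 := by simp [hbdef]
  have hbvals : b (2*g+1) = t (2*g+1) ^ 2 := by simp [hbdef, hne1]; exact fun h => absurd h (by omega)
  have hbvalmid : ∀ i, 2 ≤ i → i ≤ 2*g → b i = t i := by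
    intro i h1 h2
    have e1 : i ≠ 1 := by omega
    have e2 : i ≠ 2*g+1 := by omega
    simp [hbdef, e1, e2, h1, h2]
  have hform : ∀ m : ℕ, b m = 1 ∨ (1 ≤ m ∧ m ≤ 2*g+1 ∧ (b m = t m ^ 1 ∨ b m = t m ^ 2)) := by
    intro m
    by_cases h1 : m = 1
    · subst h1; right; exact ⟨by omega, by omega, Or.inr hbval1⟩
    by_cases h2 : m = 2*g+1
    · subst h2; right; exact ⟨by omega, by omega, Or.inr hbvals⟩
    by_cases h3 : 2 ≤ m ∧ m ≤ 2*g
    · right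
      refine ⟨by omega, by omega, Or.inl ?_⟩
      rw [pow_one]
      exact hbvalmid m h3.1 h3.2
    · left; simp [hbdef, h1, h2, h3]
  have hb : ∀ i j : ℕ, i + 2 ≤ j → Commute (b i) (b j) := by
    intro i j hij
    rcases hform i with hi | ⟨hi1, hi2, hi3⟩
    · rw [hi]; exact Commute.one_left _
    rcases hform j with hj | ⟨hj1, hj2, hj3⟩
    · rw [hj]; exact Commute.one_right _
    have hc0 : Commute (t i) (t j) := hbt i j hi1 hj2 hij
    rcases hi3 with h | h <;> rcases hj3 with h' | h' <;> rw [h, h'] <;>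
      exact hc0.pow_pow _ _
  -- index lists
  set dl := (List.range (2*g-1)).map (fun k => 2*g - k) with hdl
  have hdl_down : dl = DefectAux.down (2*g) (2*g-1) := DefectAux.range_map_sub _ _
  have hcprod : c = (dl.map t).prod := by
    rw [hc, hdl]
    unfold descChain
    rw [List.map_map]
    rfl
  have hdlmem : ∀ i ∈ dl, 2 ≤ i ∧ i ≤ 2*g := by
    intro i hi
    rw [hdl] at hi
    obtain ⟨k, hk, rfl⟩ := List.mem_map.mp hi
    rw [List.mem_range] at hk
    omega
  have hdlb : dl.map b = dl.map t :=
    List.map_congr_left (fun i hi => hbvalmid i (hdlmem i hi).1 (hdlmem i hi).2)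
  set odds := (List.range (g-1)).map (fun j => 2*j+3) with hodds
  set evens := (List.range g).map (fun j => 2*j+2) with hevens
  have hoddsmem : ∀ i ∈ odds, 3 ≤ i ∧ i ≤ 2*g-1 := by
    intro i hi
    rw [hodds] at hi
    obtain ⟨k, hk, rfl⟩ := List.mem_map.mp hi
    rw [List.mem_range] at hk
    omega
  have hevensmem : ∀ i ∈ evens, 2 ≤ i ∧ i ≤ 2*g := by
    intro i hi
    rw [hevens] at hi
    obtain ⟨k, hk, rfl⟩ := List.mem_map.mp hi
    rw [List.mem_range] at hk
    omega
  have hoddsb : odds.map b = odds.map t :=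
    List.map_congr_left (fun i hi => hbvalmid i (by have := hoddsmem i hi; omega)
      (by have := hoddsmem i hi; omega))
  have hevensb : evens.map b = evens.map t :=
    List.map_congr_left (fun i hi => hbvalmid i (hevensmem i hi).1 (hevensmem i hi).2)
  -- permutation facts
  have hMdesc : DefectAux.myDesc (2*g) = dl ++ [1] := by
    have e : 2*g = (2*g-1)+1 := by omega
    have h2 : 2*g - (2*g-1) = 1 := by omega
    have h1 := DefectAux.down_concat (2*g-1) (2*g)
    rw [← e] at h1
    rw [DefectAux.myDesc_eq_down, h1, hdl_down, h2]
  have hlN_perm : (1 :: (2*g+1) :: dl).Perm (DefectAux.myDesc (2*g+1)) := by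
    have h0 : DefectAux.myDesc (2*g+1) = (2*g+1) :: DefectAux.myDesc (2*g) := rfl
    rw [h0, hMdesc]
    exact (List.Perm.swap (2*g+1) 1 dl).trans
      (List.Perm.cons _ (List.perm_append_singleton 1 dl).symm)
  have hON : (odds ++ evens).Perm dl := by
    have hp := DefectAux.odds_evens_perm (g-1)
    have e1 : (g-1)+1 = g := by omega
    have e2 : 2*(g-1)+2 = 2*g := by omega
    have e3 : 2*(g-1)+1 = 2*g-1 := by omega
    rw [e1, e2, e3] at hp
    rw [hodds, hevens, hdl_down]
    exact hp
  have hlM_perm : (1 :: (odds ++ (2*g+1) :: evens)).Perm (1 :: (2*g+1) :: dl) :=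
    List.Perm.cons _ (List.perm_middle.trans (List.Perm.cons _ hON))
  -- conjugacy via the reorder lemma
  have hconjMN : IsConj (((1 :: (odds ++ (2*g+1) :: evens)).map b).prod)
      (((1 :: (2*g+1) :: dl).map b).prod) := by
    have h1 := DefectAux.reorder b hb (2*g+1) 1 (fun j _ => Commute.one_right _) _
      (hlM_perm.trans hlN_perm)
    have h2 := DefectAux.reorder b hb (2*g+1) 1 (fun j _ => Commute.one_right _) _ hlN_perm
    have h3 := h1.trans h2.symm
    simpa using h3
  -- products
  set X := (odds.map t).prod with hX
  set B := (evens.map t).prod with hB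
  set A := t 1 ^ 2 * (X * t (2*g+1) ^ 2) with hA
  have hPN : ((1 :: (2*g+1) :: dl).map b).prod = t 1 ^ 2 * (t (2*g+1) ^ 2 * c) := by
    rw [List.map_cons, List.map_cons, List.prod_cons, List.prod_cons, hbval1, hbvals, hdlb,
      ← hcprod]
  have hPM : ((1 :: (odds ++ (2*g+1) :: evens)).map b).prod = A * B := by
    rw [List.map_cons, List.prod_cons, List.map_append, List.prod_append, List.map_cons,
      List.prod_cons, hbval1, hbvals, hoddsb, hevensb, hA, ← hX, ← hB]
    simp [mul_assoc]
  have hABconj : IsConj (A * B) c⁻¹ := by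
    have h3 : IsConj (A * B) (t 1 ^ 2 * (t (2*g+1) ^ 2 * c)) := by
      rw [← hPM, ← hPN]; exact hconjMN
    refine h3.trans ?_
    rw [← hhyper]
    exact DefectAux.isConj_mul_comm _ _
  -- φ values
  have hφc : φ c = a / (g:ℝ) := by
    have h1 : φ (c ^ (2*g)) = ((2*g : ℕ) : ℝ) * φ c := DefectAux.qm_npow φ hhom c (2*g)
    have h2 : φ ((t (2*g+2)) ^ 2) = ((2:ℕ):ℝ) * φ (t (2*g+2)) :=
      DefectAux.qm_npow φ hhom (t (2*g+2)) 2
    have h3 : φ (t (2*g+2)) = a := hφt (2*g+2) (by omega) (by omega)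
    rw [hchain, h2, h3] at h1
    push_cast at h1
    rw [eq_div_iff (ne_of_gt hgR)]
    linear_combination -h1 / 2
  have hφu2 : φ (t 1 ^ 2) = 2*a := by
    have := DefectAux.qm_npow φ hhom (t 1) 2
    rw [← ha] at this
    push_cast at this
    linarith
  have hφs2 : φ (t (2*g+1) ^ 2) = 2*a := by
    have h1 := DefectAux.qm_npow φ hhom (t (2*g+1)) 2
    rw [hφt (2*g+1) (by omega) (by omega)] at h1
    push_cast at h1
    linarith
  have hφX : φ X = ((g:ℝ) - 1) * a := by
    have hpair : (odds.map t).Pairwise Commute := by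
      rw [hodds, List.pairwise_map, List.pairwise_map]
      refine List.Pairwise.imp_of_mem ?_ (List.pairwise_lt_range (n := g-1))
      intro i j hi hj hij
      rw [List.mem_range] at hi hj
      exact hbt (2*i+3) (2*j+3) (by omega) (by omega) (by omega)
    have hval : ∀ i ∈ odds, (φ ∘ t) i = a := by
      intro i hi
      have := hoddsmem i hi
      exact hφt i (by omega) (by omega)
    rw [hX, DefectAux.qm_list_prod φ D hq hhom _ hpair, List.map_map,
      DefectAux.list_sum_const hval, hodds, List.length_map, List.length_range,
      Nat.cast_sub hg, Nat.cast_one]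
  have hφB : φ B = (g:ℝ) * a := by
    have hpair : (evens.map t).Pairwise Commute := by
      rw [hevens, List.pairwise_map, List.pairwise_map]
      refine List.Pairwise.imp_of_mem ?_ (List.pairwise_lt_range (n := g))
      intro i j hi hj hij
      rw [List.mem_range] at hi hj
      exact hbt (2*i+2) (2*j+2) (by omega) (by omega) (by omega)
    have hval : ∀ i ∈ evens, (φ ∘ t) i = a := by
      intro i hi
      have := hevensmem i hi
      exact hφt i (by omega) (by omega)
    rw [hB, DefectAux.qm_list_prod φ D hq hhom _ hpair, List.map_map,
      DefectAux.list_sum_const hval, hevens, List.length_map, List.length_range]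
  have h_uX : Commute (t 1 ^ 2) X := by
    refine Commute.list_prod_right _ _ ?_
    intro z hz
    obtain ⟨i, hi, rfl⟩ := List.mem_map.mp hz
    have := hoddsmem i hi
    exact (hbt 1 i (by omega) (by omega) (by omega)).pow_left 2
  have h_us : Commute (t 1 ^ 2) (t (2*g+1) ^ 2) :=
    (hbt 1 (2*g+1) (by omega) (by omega) (by omega)).pow_pow 2 2
  have h_Xs : Commute X (t (2*g+1) ^ 2) := by
    refine (Commute.list_prod_right _ _ ?_).symm
    intro z hz
    obtain ⟨i, hi, rfl⟩ := List.mem_map.mp hz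
    have := hoddsmem i hi
    exact ((hbt i (2*g+1) (by omega) (by omega) (by omega)).symm).pow_left 2
  have hφA : φ A = 2*a + (((g:ℝ)-1)*a + 2*a) := by
    rw [hA, DefectAux.qm_commute φ D hq hhom (h_uX.mul_right h_us),
      DefectAux.qm_commute φ D hq hhom h_Xs, hφu2, hφX, hφs2]
  have hφAB : φ (A * B) = -(a / (g:ℝ)) := by
    rw [DefectAux.qm_isConj φ D hq hhom hABconj, DefectAux.qm_inv φ hhom, hφc]
  have hkey := hq A B
  have hcoef : (0:ℝ) < 2*(g:ℝ)+3+1/(g:ℝ) := by positivity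
  have habs : |φ (A * B) - φ A - φ B| = (2*(g:ℝ)+3+1/(g:ℝ)) * |a| := by
    rw [hφAB, hφA, hφB]
    have he : -(a/(g:ℝ)) - (2*a + (((g:ℝ)-1)*a + 2*a)) - (g:ℝ)*a
        = -((2*(g:ℝ)+3+1/(g:ℝ)) * a) := by
      have hgne : (g:ℝ) ≠ 0 := ne_of_gt hgR
      field_simp
      ring
    rw [he, abs_neg, abs_mul, abs_of_pos hcoef]
  rw [habs] at hkey
  exact hkey
end
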